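/- Let (a,b) be a finite interval and let w : (a,b) → ℂ be an integrable function such that x ↦ x^k w(x) is integrable for every k ∈ ℕ. If ∫_a^b x^k w(x) dx = 0 for all k ∈ ℕ, then w = 0 almost everywhere on (a,b). -/

import Mathlib

open MeasureTheory Matrix
open scoped ComplexOrder

noncomputable section

/-- The set of real points strictly between the extended-real endpoints `a` and `b`. -/
def weightSupport (a b : EReal) : Set ℝ := {x : ℝ | a < (x : EReal) ∧ (x : EReal) < b}

variable {I : Type} [Fintype I] [DecidableEq I]
variable {I' : Type} [Fintype I'] [DecidableEq I']

/-- Entrywise integral of a matrix-valued function over a set. -/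
def matIntegral (S : Set ℝ) (F : ℝ → Matrix I I ℂ) : Matrix I I ℂ :=
  Matrix.of fun i j => ∫ x in S, F x i j

/-- `W` is a matrix weight on the (nondegenerate) interval `(a,b)`. -/
def IsMatrixWeight (a b : EReal) (W : ℝ → Matrix I I ℂ) : Prop :=
  a < b ∧
  (∀ x ∈ weightSupport a b, (W x).PosSemidef) ∧
  (∀ᵐ x : ℝ ∂(volume.restrict (weightSupport a b)), (W x).PosDef) ∧
  (∀ n : ℕ, ∀ i j, IntegrableOn (fun x : ℝ => (x : ℂ) ^ n * W x i j) (weightSupport a b))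

/-- Equivalence of matrix weights: `W' = M W M*` for a nonsingular `M`. -/
def WeightEquiv (a b : EReal) (W : ℝ → Matrix I I ℂ) (W' : ℝ → Matrix I' I' ℂ) : Prop :=
  ∃ (M : Matrix I' I ℂ) (M' : Matrix I I' ℂ), M * M' = 1 ∧ M' * M = 1 ∧
    ∀ x ∈ weightSupport a b, W' x = M * W x * Mᴴ

/-- Unitary equivalence of matrix weights. -/
def UnitaryWeightEquiv (a b : EReal) (W : ℝ → Matrix I I ℂ) (W' : ℝ → Matrix I' I' ℂ) : Prop :=
  ∃ M : Matrix I' I ℂ, M * Mᴴ = 1 ∧ Mᴴ * M = 1 ∧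
    ∀ x ∈ weightSupport a b, W' x = M * W x * Mᴴ

/-- `W` reduces: it is equivalent to a direct sum of two matrix weights of smaller size. -/
def Reduces (a b : EReal) (W : ℝ → Matrix I I ℂ) : Prop :=
  ∃ (N₁ N₂ : ℕ) (W₁ : ℝ → Matrix (Fin N₁) (Fin N₁) ℂ) (W₂ : ℝ → Matrix (Fin N₂) (Fin N₂) ℂ),
    0 < N₁ ∧ 0 < N₂ ∧ N₁ + N₂ = Fintype.card I ∧
    IsMatrixWeight a b W₁ ∧ IsMatrixWeight a b W₂ ∧
    WeightEquiv a b W (fun x => Matrix.fromBlocks (W₁ x) 0 0 (W₂ x))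

/-- The real vector space `C_ℝ` of a matrix weight. -/
def CR (a b : EReal) (W : ℝ → Matrix I I ℂ) : Set (Matrix I I ℂ) :=
  {T | ∀ᵐ x ∂(volume.restrict (weightSupport a b)), T * W x = W x * Tᴴ}

/-- Evaluation of a matrix polynomial at a real point. -/
def polyEval (p : Polynomial (Matrix I I ℂ)) (x : ℝ) : Matrix I I ℂ :=
  p.eval ((x : ℂ) • (1 : Matrix I I ℂ))

/-- A sequence of orthogonal polynomials with respect to `W`:  `Q n` has degree `n` with
nonsingular leading coefficient, and distinct members are orthogonal. -/
def IsOPS (a b : EReal) (W : ℝ → Matrix I I ℂ) (Q : ℕ → Polynomial (Matrix I I ℂ)) : Prop :=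
  (∀ n, (Q n).natDegree = n ∧ IsUnit ((Q n).coeff n)) ∧
  ∀ n m, n ≠ m →
    matIntegral (weightSupport a b) (fun x => polyEval (Q n) x * W x * (polyEval (Q m) x)ᴴ) = 0

/-- The sequence of monic orthogonal polynomials with respect to `W`. -/
def IsMonicOPS (a b : EReal) (W : ℝ → Matrix I I ℂ) (P : ℕ → Polynomial (Matrix I I ℂ)) : Prop :=
  (∀ n, (P n).Monic ∧ (P n).natDegree = n) ∧
  ∀ n m, n ≠ m →
    matIntegral (weightSupport a b) (fun x => polyEval (P n) x * W x * (polyEval (P m) x)ᴴ) = 0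

end

/-- If `w` is integrable on the finite interval `(a,b)`, with `x^k w(x)`
integrable for all `k`, and all moments `∫ x^k w(x) dx` vanish, then `w = 0` almost
everywhere on `(a,b)`. -/
theorem stmt_11 (a b : ℝ) (w : ℝ → ℂ)
    (hint : ∀ k : ℕ, IntegrableOn (fun x : ℝ => (x : ℂ) ^ k * w x) (Set.Ioo a b))
    (hmom : ∀ k : ℕ, ∫ x in Set.Ioo a b, (x : ℂ) ^ k * w x = 0) :
    ∀ᵐ x : ℝ ∂(volume.restrict (Set.Ioo a b)), w x = 0 := by
  have hw : IntegrableOn w (Set.Ioo a b) := by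
    have := hint 0; simpa using this
  -- any continuous function times `w` is integrable on `(a,b)`
  have hbdint : ∀ f : ℝ → ℝ, Continuous f →
      IntegrableOn (fun x => (f x : ℂ) * w x) (Set.Ioo a b) := by
    intro f hf
    obtain ⟨C, hC⟩ :=
      (isCompact_Icc (a := a) (b := b)).exists_bound_of_continuousOn hf.continuousOn
    refine Integrable.bdd_mul (c := C) hw
      ((Complex.continuous_ofReal.comp hf).aestronglyMeasurable) ?_
    refine (ae_restrict_iff' measurableSet_Ioo).2 (ae_of_all _ fun x hx => ?_)
    simpa using hC x (Set.Ioo_subset_Icc_self hx)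
  -- all polynomial moments vanish
  have hpoly : ∀ p : Polynomial ℝ,
      ∫ x in Set.Ioo a b, ((p.eval x : ℝ) : ℂ) * w x = 0 := by
    intro p
    have heq : ∀ x : ℝ, ((p.eval x : ℝ) : ℂ) * w x =
        ∑ i ∈ Finset.range (p.natDegree + 1),
          (p.coeff i : ℂ) * ((x : ℂ) ^ i * w x) := by
      intro x
      rw [Polynomial.eval_eq_sum_range]
      push_cast
      rw [Finset.sum_mul]
      exact Finset.sum_congr rfl fun i _ => by ring
    simp_rw [heq]
    rw [integral_finset_sum]
    · refine Finset.sum_eq_zero fun i _ => ?_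
      rw [integral_const_mul, hmom i, mul_zero]
    · exact fun i _ => (hint i).const_mul _
  -- the integral of `g • w` vanishes for every continuous `g`
  have hcont : ∀ g : ℝ → ℝ, Continuous g →
      ∫ x in Set.Ioo a b, (g x : ℂ) * w x = 0 := by
    intro g hg
    set M : ℝ := ∫ x in Set.Ioo a b, ‖w x‖ with hM
    have hM0 : 0 ≤ M := integral_nonneg fun x => norm_nonneg _
    rw [← norm_le_zero_iff]
    refine le_of_forall_pos_le_add fun ε hε => ?_
    set ε' : ℝ := ε / (M + 1) with hε'
    have hε'pos : 0 < ε' := div_pos hε (by linarith)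
    obtain ⟨p, hp⟩ := exists_polynomial_near_continuousMap a b
      ((⟨g, hg⟩ : C(ℝ, ℝ)).restrict (Set.Icc a b)) ε' hε'pos
    have hbound : ∀ x ∈ Set.Icc a b, |p.eval x - g x| ≤ ε' := by
      intro x hx
      have := (p.toContinuousMapOn (Set.Icc a b) -
        ((⟨g, hg⟩ : C(ℝ, ℝ)).restrict (Set.Icc a b))).norm_coe_le_norm ⟨x, hx⟩
      simp only [ContinuousMap.sub_apply, Polynomial.toContinuousMapOn_apply,
        Polynomial.toContinuousMap_apply, ContinuousMap.restrict_apply,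
        ContinuousMap.coe_mk, Real.norm_eq_abs] at this
      exact this.trans hp.le
    have hsplit : ∫ x in Set.Ioo a b, (g x : ℂ) * w x =
        (∫ x in Set.Ioo a b, ((g x - p.eval x : ℝ) : ℂ) * w x) +
          ∫ x in Set.Ioo a b, ((p.eval x : ℝ) : ℂ) * w x := by
      rw [← integral_add (hbdint (fun x => g x - p.eval x) (hg.sub p.continuous))
        (hbdint _ p.continuous)]
      congr 1; funext x; push_cast; ring
    rw [hsplit, hpoly p, add_zero]
    calc ‖∫ x in Set.Ioo a b, ((g x - p.eval x : ℝ) : ℂ) * w x‖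
        ≤ ∫ x in Set.Ioo a b, ‖((g x - p.eval x : ℝ) : ℂ) * w x‖ :=
          norm_integral_le_integral_norm _
      _ ≤ ∫ x in Set.Ioo a b, ε' * ‖w x‖ := by
          refine setIntegral_mono_on (hbdint _ (hg.sub p.continuous)).norm
            (hw.norm.const_mul ε') measurableSet_Ioo fun x hx => ?_
          rw [norm_mul]
          have : ‖((g x - p.eval x : ℝ) : ℂ)‖ ≤ ε' := by
            rw [Complex.norm_real, Real.norm_eq_abs, abs_sub_comm]
            exact hbound x (Set.Ioo_subset_Icc_self hx)
          exact mul_le_mul_of_nonneg_right this (norm_nonneg _)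
      _ = ε' * M := by rw [integral_const_mul]
      _ ≤ ε := by
          rw [hε', div_mul_eq_mul_div, div_le_iff₀ (by linarith)]
          nlinarith
      _ = 0 + ε := by ring
  -- conclude with the distribution-theoretic criterion
  have key := (isOpen_Ioo (a := a) (b := b)).ae_eq_zero_of_integral_contDiff_smul_eq_zero
    (μ := volume) hw.locallyIntegrableOn ?_
  · rwa [ae_restrict_iff' measurableSet_Ioo]
  · intro g hgsm hgsupp hgsub
    have : ∫ x, g x • w x = ∫ x in Set.Ioo a b, g x • w x := by
      rw [setIntegral_eq_integral_of_forall_compl_eq_zero]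
      intro x hx
      have : g x = 0 := by
        by_contra h
        exact hx (hgsub (subset_tsupport g h))
      simp [this]
    rw [this]
    simp_rw [Complex.real_smul]
    exact hcont g hgsm.continuous
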